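/- Vanishing of edge sums propagates between trees: let γ_{ij} = −γ_{ji} (1 ≤ i,j ≤ n) be an antisymmetric array of real numbers, and for an unrooted labelled tree T on vertices {1,…,n} and edge e ∈ E_T define Γ_e = Σ_{i ∈ V(T_e^s)} Σ_{j ∈ V(T_e^t)} γ_{ij}, where T_e^s, T_e^t are the two components of T after removing e. If Γ_e = 0 for all e ∈ E_T, then for every other unrooted labelled tree T' on the same vertex set (with the same array γ_{ij}) one also has Γ'_e = 0 for all e ∈ E_{T'}. -/

import Mathlib

open scoped Classical

set_option maxHeartbeats 1000000

/-- For an antisymmetric array `γ` and a graph `T` on `Fin n`, the edge sum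
`Γ_e = Σ_{k ∈ V(T_e^s)} Σ_{l ∈ V(T_e^t)} γ k l` attached to the (oriented) edge
`e = (i,j)`: here `T_e^s` and `T_e^t` are the two connected components of `T` with the
edge `{i,j}` removed, containing `i` and `j` respectively. -/
noncomputable def edgeSum {n : ℕ} (γ : Fin n → Fin n → ℝ) (T : SimpleGraph (Fin n))
    (i j : Fin n) : ℝ :=
  ∑ k, ∑ l,
    if (T.deleteEdges {s(i, j)}).Reachable k i ∧ (T.deleteEdges {s(i, j)}).Reachable l j
    then γ k l else 0

/-- An edge of an acyclic graph is a bridge: deleting it disconnects its endpoints. -/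
lemma tree_bridge {V : Type*} {T : SimpleGraph V} (hT : T.IsAcyclic) {i j : V}
    (hij : T.Adj i j) : ¬ (T.deleteEdges {s(i,j)}).Reachable i j := by
  have := (SimpleGraph.isAcyclic_iff_forall_adj_isBridge.mp hT hij)
  rw [SimpleGraph.isBridge_iff] at this
  exact this

lemma reach_or_aux {V : Type*} {T : SimpleGraph V} (i j : V) {a b : V} (p : T.Walk a b) :
    (T.deleteEdges {s(i,j)}).Reachable a b ∨ (T.deleteEdges {s(i,j)}).Reachable a i ∨
      (T.deleteEdges {s(i,j)}).Reachable a j := by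
  induction p with
  | nil => exact Or.inl (SimpleGraph.Reachable.refl _)
  | @cons a c b hab q ih =>
    by_cases he : s(a,c) = s(i,j)
    · rw [Sym2.eq_iff] at he
      rcases he with ⟨rfl, rfl⟩ | ⟨rfl, rfl⟩
      · exact Or.inr (Or.inl (SimpleGraph.Reachable.refl _))
      · exact Or.inr (Or.inr (SimpleGraph.Reachable.refl _))
    · have hadj : (T.deleteEdges {s(i,j)}).Adj a c := by
        rw [SimpleGraph.deleteEdges_adj]
        exact ⟨hab, by simpa using he⟩
      rcases ih with h1 | h1 | h1
      · exact Or.inl (hadj.reachable.trans h1)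
      · exact Or.inr (Or.inl (hadj.reachable.trans h1))
      · exact Or.inr (Or.inr (hadj.reachable.trans h1))

/-- After deleting an edge of a tree, every vertex reaches exactly one of the endpoints. -/
lemma reach_dichotomy {V : Type*} {T : SimpleGraph V} (hT : T.IsTree) {i j : V}
    (hij : T.Adj i j) (l : V) :
    (T.deleteEdges {s(i,j)}).Reachable l j ↔ ¬ (T.deleteEdges {s(i,j)}).Reachable l i := by
  constructor
  · intro h1 h2
    exact tree_bridge hT.IsAcyclic hij (h2.symm.trans h1)
  · intro h2
    obtain ⟨p⟩ := hT.isConnected.preconnected l i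
    rcases reach_or_aux i j p with h | h | h
    · exact absurd h h2
    · exact absurd h h2
    · exact h

/-- The unique branch of `v` containing `k ≠ v`. -/
lemma branch_existsUnique {V : Type*} {T : SimpleGraph V} (hT : T.IsTree) {v k : V}
    (hk : k ≠ v) :
    ∃! w, T.Adj v w ∧ (T.deleteEdges {s(v,w)}).Reachable k w := by
  obtain ⟨w0⟩ := hT.isConnected.preconnected v k
  obtain ⟨q, hq⟩ := w0.toPath
  cases q with
  | nil => exact absurd rfl hk.symm
  | @cons _ u _ hvu r =>
    rw [SimpleGraph.Walk.cons_isPath_iff] at hq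
    have hvs : v ∉ r.support := hq.2
    have hlift : ∀ w' : V, ∀ e ∈ r.edges, e ∉ ({s(v,w')} : Set (Sym2 V)) := by
      intro w' e he hmem
      rw [Set.mem_singleton_iff] at hmem
      subst hmem
      exact hvs (SimpleGraph.Walk.fst_mem_support_of_mem_edges r he)
    have hreach : ∀ w' : V, (T.deleteEdges {s(v,w')}).Reachable u k :=
      fun w' => ⟨r.toDeleteEdges _ (hlift w')⟩
    refine ⟨u, ⟨hvu, (hreach u).symm⟩, ?_⟩
    rintro w' ⟨hvw', hkw'⟩
    by_contra hne
    have hedge : s(v,u) ≠ s(v,w') := by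
      intro h
      rw [Sym2.eq_iff] at h
      rcases h with ⟨-, rfl⟩ | ⟨rfl, rfl⟩
      · exact hne rfl
      · exact T.irrefl hvw'
    have hadj : (T.deleteEdges {s(v,w')}).Adj v u := by
      rw [SimpleGraph.deleteEdges_adj]
      exact ⟨hvu, by simpa using hedge⟩
    exact tree_bridge hT.IsAcyclic hvw'
      (hadj.reachable.trans ((hreach w').trans hkw'))

lemma antisym_sum_zero {ι : Type*} [Fintype ι] (γ : ι → ι → ℝ)
    (hγ : ∀ i j, γ i j = - γ j i) (P : ι → Prop) :
    ∑ k, ∑ l, (if P k ∧ P l then γ k l else 0) = 0 := by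
  set S := ∑ k, ∑ l, (if P k ∧ P l then γ k l else 0) with hS
  have h2 : S = -S := by
    calc S = ∑ l, ∑ k, (if P k ∧ P l then γ k l else 0) := Finset.sum_comm
    _ = ∑ k, ∑ l, (if P l ∧ P k then γ l k else 0) := rfl
    _ = ∑ k, ∑ l, -(if P k ∧ P l then γ k l else 0) := by
        apply Finset.sum_congr rfl; intro k _; apply Finset.sum_congr rfl; intro l _
        by_cases h1 : P k <;> by_cases h2 : P l <;> simp [h1, h2, hγ l k]
    _ = -S := by rw [hS]; simp
  linarith

/-- The edge sum as a sum of row sums over one component. -/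
lemma edgeSum_eq {n : ℕ} (γ : Fin n → Fin n → ℝ) (hγ : ∀ i j, γ i j = - γ j i)
    {T : SimpleGraph (Fin n)} (hT : T.IsTree) {i j : Fin n} (hij : T.Adj i j) :
    edgeSum γ T i j =
      ∑ k, (if (T.deleteEdges {s(i,j)}).Reachable k i then (∑ l, γ k l) else 0) := by
  set D := T.deleteEdges {s(i,j)} with hD
  have hdich := reach_dichotomy hT hij
  have step : ∀ k l : Fin n,
      (if D.Reachable k i ∧ D.Reachable l j then γ k l else 0) =
      (if D.Reachable k i then γ k l else 0)
        - (if D.Reachable k i ∧ D.Reachable l i then γ k l else 0) := by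
    intro k l
    by_cases h1 : D.Reachable k i
    · by_cases h2 : D.Reachable l i
      · have h3 : ¬ D.Reachable l j := fun hlj => (hdich l).mp hlj h2
        simp [h1, h2, h3]
      · simp [h1, h2, show D.Reachable l j from (hdich l).mpr h2]
    · simp [h1]
  have hz : ∑ k, ∑ l, (if D.Reachable k i ∧ D.Reachable l i then γ k l else 0) = 0 := by
    have hz0 := antisym_sum_zero γ hγ (fun x => D.Reachable x i)
    convert hz0 using 4
  calc edgeSum γ T i j
      = ∑ k, ∑ l, ((if D.Reachable k i then γ k l else 0)
          - (if D.Reachable k i ∧ D.Reachable l i then γ k l else 0)) := by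
        unfold edgeSum
        exact Finset.sum_congr rfl fun k _ => Finset.sum_congr rfl fun l _ => step k l
    _ = (∑ k, ∑ l, (if D.Reachable k i then γ k l else 0))
        - ∑ k, ∑ l, (if D.Reachable k i ∧ D.Reachable l i then γ k l else 0) := by
        rw [← Finset.sum_sub_distrib]
        exact Finset.sum_congr rfl fun k _ => Finset.sum_sub_distrib _ _
    _ = ∑ k, ∑ l, (if D.Reachable k i then γ k l else 0) := by rw [hz, sub_zero]
    _ = ∑ k, (if D.Reachable k i then (∑ l, γ k l) else 0) := by
        apply Finset.sum_congr rfl; intro k _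
        by_cases h1 : D.Reachable k i <;> simp [h1]

/-- If all edge sums of a tree vanish, then all row sums vanish. -/
lemma rowSum_eq_zero {n : ℕ} (γ : Fin n → Fin n → ℝ) (hγ : ∀ i j, γ i j = - γ j i)
    {T : SimpleGraph (Fin n)} (hT : T.IsTree)
    (h : ∀ i j, T.Adj i j → edgeSum γ T i j = 0) (v : Fin n) :
    ∑ l, γ v l = 0 := by
  -- per-edge vanishing of component sums
  have perEdge : ∀ w : Fin n, T.Adj v w →
      ∑ k, (if (T.deleteEdges {s(v,w)}).Reachable k w then (∑ l, γ k l) else 0) = 0 := by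
    intro w hvw
    have h1 := edgeSum_eq γ hγ hT hvw.symm
    rw [h w v hvw.symm] at h1
    have hsw : s(w,v) = s(v,w) := Sym2.eq_swap
    rw [hsw] at h1
    exact h1.symm
  have htotal : ∑ k : Fin n, ∑ l, γ k l = 0 := by
    have := antisym_sum_zero γ hγ (fun _ => True)
    simpa using this
  -- double counting over the neighbors of v
  have key : ∑ w ∈ T.neighborFinset v,
      ∑ k, (if (T.deleteEdges {s(v,w)}).Reachable k w then (∑ l, γ k l) else 0) = 0 := by
    apply Finset.sum_eq_zero
    intro w hw
    exact perEdge w (by rwa [SimpleGraph.mem_neighborFinset] at hw)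
  rw [Finset.sum_comm] at key
  have inner : ∀ k : Fin n,
      (∑ w ∈ T.neighborFinset v,
        (if (T.deleteEdges {s(v,w)}).Reachable k w then (∑ l, γ k l) else 0))
      = (if k = v then 0 else (∑ l, γ k l)) := by
    intro k
    by_cases hk : k = v
    · subst hk
      rw [if_pos rfl]
      apply Finset.sum_eq_zero
      intro w hw
      rw [SimpleGraph.mem_neighborFinset] at hw
      rw [if_neg]
      intro hr
      exact tree_bridge hT.IsAcyclic hw hr
    · rw [if_neg hk]
      obtain ⟨u, ⟨huadj, hureach⟩, huniq⟩ := branch_existsUnique hT hk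
      rw [Finset.sum_eq_single_of_mem u (by rwa [SimpleGraph.mem_neighborFinset])]
      · rw [if_pos hureach]
      · intro b hb hbu
        rw [SimpleGraph.mem_neighborFinset] at hb
        rw [if_neg]
        intro hr
        exact hbu (huniq b ⟨hb, hr⟩)
  rw [Finset.sum_congr rfl (fun k _ => inner k)] at key
  have h4 : ∑ k : Fin n, (if k = v then (∑ l, γ k l) else 0) = ∑ l, γ v l := by
    rw [Finset.sum_ite_eq' Finset.univ v (fun k => ∑ l, γ k l)]
    simp
  have split : (∑ k : Fin n, (if k = v then 0 else (∑ l, γ k l)))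
      + ∑ k : Fin n, (if k = v then (∑ l, γ k l) else 0) = ∑ k : Fin n, ∑ l, γ k l := by
    rw [← Finset.sum_add_distrib]
    apply Finset.sum_congr rfl
    intro k _
    by_cases hk : k = v <;> simp [hk]
  rw [key, h4, htotal, zero_add] at split
  exact split

/-- Vanishing of edge sums propagates between trees: if `γ` is antisymmetric and all the
edge sums `Γ_e` of a tree `T` on `{1,…,n}` vanish, then the edge sums of every other
tree `T'` on the same vertex set (with the same `γ`) vanish as well. -/
theorem edgeSum_vanishing_propagates (n : ℕ) (γ : Fin n → Fin n → ℝ)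
    (hγ : ∀ i j, γ i j = - γ j i)
    (T T' : SimpleGraph (Fin n)) (hT : T.IsTree) (hT' : T'.IsTree)
    (h : ∀ i j, T.Adj i j → edgeSum γ T i j = 0) :
    ∀ i j, T'.Adj i j → edgeSum γ T' i j = 0 := by
  intro i j hij
  rw [edgeSum_eq γ hγ hT' hij]
  apply Finset.sum_eq_zero
  intro k _
  rw [rowSum_eq_zero γ hγ hT h k]
  simp
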